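/- arXiv:2308.06116 — 2 statements merged into one kernel-verified Lean document; each statement's English description precedes it below -/
import Mathlib

section
/- (Robbins–Siegmund) Let $\{\mathcal{F}_n\}_{n \geq 1}$ be a filtration and let $\nu_n, a_n, b_n, c_n$ be non-negative random variables adapted to $\mathcal{F}_n$ satisfying $\mathbb{E}[\nu_{n+1} \mid \mathcal{F}_n] \leq \nu_n (1 + a_n) + b_n - c_n$ for all $n$, with $\sum_{n=1}^\infty a_n < \infty$ and $\sum_{n=1}^\infty b_n < \infty$ almost surely. Then almost surely $\nu_n$ converges and $\sum_{n=1}^\infty c_n < \infty$. -/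
open Filter MeasureTheory
open Finset Topology

section RSaux

variable {Ω : Type*}

/-- product of (1+a_k), k < n -/
def RSpi (a : ℕ → Ω → ℝ) (n : ℕ) (ω : Ω) : ℝ := ∏ k ∈ Finset.range n, (1 + a k ω)

variable {a b c ν : ℕ → Ω → ℝ}

theorem RSpi_one_le (ha : ∀ n ω, 0 ≤ a n ω) (n : ℕ) (ω : Ω) : 1 ≤ RSpi a n ω := by
  unfold RSpi
  have h := Finset.prod_le_prod (s := Finset.range n) (f := fun _ => (1:ℝ))
    (g := fun k => 1 + a k ω) (fun _ _ => zero_le_one)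
    (fun k _ => show (1:ℝ) ≤ 1 + a k ω by linarith [ha k ω])
  simpa using h

theorem RSpi_pos (ha : ∀ n ω, 0 ≤ a n ω) (n : ℕ) (ω : Ω) : 0 < RSpi a n ω :=
  lt_of_lt_of_le one_pos (RSpi_one_le ha n ω)

theorem RSpi_succ (n : ℕ) (ω : Ω) : RSpi a (n + 1) ω = RSpi a n ω * (1 + a n ω) :=
  Finset.prod_range_succ _ _

theorem RSpi_mono (ha : ∀ n ω, 0 ≤ a n ω) (ω : Ω) : Monotone fun n => RSpi a n ω := by
  apply monotone_nat_of_le_succ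
  intro n
  rw [RSpi_succ]
  nlinarith [RSpi_pos ha n ω, ha n ω]

theorem RSpi_le_exp (ha : ∀ n ω, 0 ≤ a n ω) (ω : Ω) (hsum : Summable fun n => a n ω) (n : ℕ) :
    RSpi a n ω ≤ Real.exp (∑' k, a k ω) := by
  unfold RSpi
  have h1 : (∏ k ∈ Finset.range n, (1 + a k ω)) ≤ ∏ k ∈ Finset.range n, Real.exp (a k ω) := by
    apply Finset.prod_le_prod
    · intro k _; linarith [ha k ω]
    · intro k _
      have := Real.add_one_le_exp (a k ω); linarith
  rw [← Real.exp_sum] at h1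
  refine h1.trans (Real.exp_le_exp.2 ?_)
  exact Summable.sum_le_tsum _ (fun k _ => ha k ω) hsum

/-- normalized process: x_n / π_n -/
noncomputable def RSnorm (a x : ℕ → Ω → ℝ) (n : ℕ) : Ω → ℝ := fun ω => (RSpi a n ω)⁻¹ * x n ω

/-- normalized increment: x_n / π_{n+1} -/
noncomputable def RSnorm' (a x : ℕ → Ω → ℝ) (n : ℕ) : Ω → ℝ := fun ω => (RSpi a (n+1) ω)⁻¹ * x n ω

theorem RSnorm_nonneg (ha : ∀ n ω, 0 ≤ a n ω) (hx : ∀ n ω, 0 ≤ x n ω) (n : ℕ) (ω : Ω) :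
    0 ≤ RSnorm a x n ω :=
  mul_nonneg (inv_nonneg.2 (RSpi_pos ha n ω).le) (hx n ω)

theorem RSnorm'_nonneg (ha : ∀ n ω, 0 ≤ a n ω) (hx : ∀ n ω, 0 ≤ x n ω) (n : ℕ) (ω : Ω) :
    0 ≤ RSnorm' a x n ω :=
  mul_nonneg (inv_nonneg.2 (RSpi_pos ha (n+1) ω).le) (hx n ω)

theorem RSnorm_le (ha : ∀ n ω, 0 ≤ a n ω) (hx : ∀ n ω, 0 ≤ x n ω) (n : ℕ) (ω : Ω) :
    RSnorm a x n ω ≤ x n ω := by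
  have h1 := RSpi_one_le ha n ω
  have : (RSpi a n ω)⁻¹ ≤ 1 := inv_le_one_of_one_le₀ h1
  have h0 : 0 ≤ (RSpi a n ω)⁻¹ := inv_nonneg.2 (by linarith)
  calc RSnorm a x n ω = (RSpi a n ω)⁻¹ * x n ω := rfl
    _ ≤ 1 * x n ω := mul_le_mul_of_nonneg_right this (hx n ω)
    _ = x n ω := one_mul _

theorem RSnorm'_le (ha : ∀ n ω, 0 ≤ a n ω) (hx : ∀ n ω, 0 ≤ x n ω) (n : ℕ) (ω : Ω) :
    RSnorm' a x n ω ≤ x n ω := by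
  have h1 := RSpi_one_le ha (n+1) ω
  have : (RSpi a (n+1) ω)⁻¹ ≤ 1 := inv_le_one_of_one_le₀ h1
  have h0 : 0 ≤ (RSpi a (n+1) ω)⁻¹ := inv_nonneg.2 (by linarith)
  calc RSnorm' a x n ω = (RSpi a (n+1) ω)⁻¹ * x n ω := rfl
    _ ≤ 1 * x n ω := mul_le_mul_of_nonneg_right this (hx n ω)
    _ = x n ω := one_mul _

/-- the compensated supermartingale-candidate (negated: submartingale) -/
noncomputable def RSY (a b c ν : ℕ → Ω → ℝ) (n : ℕ) : Ω → ℝ := fun ω =>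
  (∑ k ∈ Finset.range n, (RSnorm' a b k ω - RSnorm' a c k ω)) - RSnorm a ν n ω

/-- indicator of "partial sums of b' up to n still ≤ M" -/
noncomputable def RSI (a b : ℕ → Ω → ℝ) (M : ℕ) (n : ℕ) : Ω → ℝ := fun ω =>
  if ∑ j ∈ Finset.range (n+1), RSnorm' a b j ω ≤ (M:ℝ) then 1 else 0

/-- the stopped process -/
noncomputable def RSZ (a b c ν : ℕ → Ω → ℝ) (M : ℕ) (n : ℕ) : Ω → ℝ := fun ω =>
  RSY a b c ν 0 ω +
    ∑ k ∈ Finset.range n, RSI a b M k ω * (RSY a b c ν (k+1) ω - RSY a b c ν k ω)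

theorem RSZ_succ (M n : ℕ) (ω : Ω) :
    RSZ a b c ν M (n+1) ω =
      RSZ a b c ν M n ω + RSI a b M n ω * (RSY a b c ν (n+1) ω - RSY a b c ν n ω) := by
  unfold RSZ
  rw [Finset.sum_range_succ]
  ring

theorem RSY_le_sum (ha : ∀ n ω, 0 ≤ a n ω) (hν : ∀ n ω, 0 ≤ ν n ω) (hc : ∀ n ω, 0 ≤ c n ω)
    (n : ℕ) (ω : Ω) :
    RSY a b c ν n ω ≤ ∑ k ∈ Finset.range n, RSnorm' a b k ω := by
  unfold RSY
  have h1 : 0 ≤ RSnorm a ν n ω := RSnorm_nonneg ha hν n ω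
  have h2 : ∑ k ∈ Finset.range n, (RSnorm' a b k ω - RSnorm' a c k ω)
      ≤ ∑ k ∈ Finset.range n, RSnorm' a b k ω := by
    apply Finset.sum_le_sum
    intro k _
    linarith [RSnorm'_nonneg ha hc k ω]
  linarith

theorem RSZ_eq_RSY (ha : ∀ n ω, 0 ≤ a n ω) (hb : ∀ n ω, 0 ≤ b n ω) {M n : ℕ} {ω : Ω}
    (h : ∑ j ∈ Finset.range n, RSnorm' a b j ω ≤ (M:ℝ)) :
    RSZ a b c ν M n ω = RSY a b c ν n ω := by
  induction n with
  | zero => simp [RSZ]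
  | succ n ih =>
    have hmono : ∑ j ∈ Finset.range n, RSnorm' a b j ω
        ≤ ∑ j ∈ Finset.range (n+1), RSnorm' a b j ω := by
      rw [Finset.sum_range_succ]
      linarith [RSnorm'_nonneg ha hb n ω]
    rw [RSZ_succ, ih (hmono.trans h), RSI, if_pos h]
    ring

theorem RSZ_le (ha : ∀ n ω, 0 ≤ a n ω) (hb : ∀ n ω, 0 ≤ b n ω) (hν : ∀ n ω, 0 ≤ ν n ω)
    (hc : ∀ n ω, 0 ≤ c n ω) (M n : ℕ) (ω : Ω) :
    RSZ a b c ν M n ω ≤ (M:ℝ) := by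
  induction n with
  | zero =>
    have : RSZ a b c ν M 0 ω = RSY a b c ν 0 ω := by simp [RSZ]
    rw [this]
    have h := RSY_le_sum (b := b) ha hν hc 0 ω
    simp only [Finset.range_zero, Finset.sum_empty] at h
    exact h.trans (by positivity)
  | succ n ih =>
    rw [RSZ_succ]
    by_cases h : ∑ j ∈ Finset.range (n+1), RSnorm' a b j ω ≤ (M:ℝ)
    · rw [RSI, if_pos h, one_mul]
      have hZn : RSZ a b c ν M n ω = RSY a b c ν n ω := by
        apply RSZ_eq_RSY ha hb
        refine le_trans ?_ h
        rw [Finset.sum_range_succ]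
        linarith [RSnorm'_nonneg ha hb n ω]
      rw [hZn]
      have := RSY_le_sum (b := b) ha hν hc (n+1) ω
      linarith
    · rw [RSI, if_neg h, zero_mul, add_zero]
      exact ih


end RSaux

/-- Robbins–Siegmund lemma: for non-negative adapted integrable sequences with
`E[ν_{n+1} | F_n] ≤ ν_n (1 + a_n) + b_n - c_n` and `∑ a_n, ∑ b_n < ∞` a.s.,
the sequence `ν_n` converges a.s. and `∑ c_n < ∞` a.s. -/
theorem stmt_4 {Ω : Type*} {mΩ : MeasurableSpace Ω} (P : Measure Ω) [IsProbabilityMeasure P]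
    (F : ℕ → MeasurableSpace Ω) (hF_mono : Monotone F) (hF_le : ∀ n, F n ≤ mΩ)
    (ν a b c : ℕ → Ω → ℝ)
    (hν_nonneg : ∀ n ω, 0 ≤ ν n ω) (ha_nonneg : ∀ n ω, 0 ≤ a n ω)
    (hb_nonneg : ∀ n ω, 0 ≤ b n ω) (hc_nonneg : ∀ n ω, 0 ≤ c n ω)
    (hν_adapted : ∀ n, Measurable[F n] (ν n)) (ha_adapted : ∀ n, Measurable[F n] (a n))
    (hb_adapted : ∀ n, Measurable[F n] (b n)) (hc_adapted : ∀ n, Measurable[F n] (c n))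
    (hν_int : ∀ n, Integrable (ν n) P) (ha_int : ∀ n, Integrable (a n) P)
    (hb_int : ∀ n, Integrable (b n) P) (hc_int : ∀ n, Integrable (c n) P)
    (hineq : ∀ n, ∀ᵐ ω ∂P, (P[ν (n + 1) | F n]) ω ≤ ν n ω * (1 + a n ω) + b n ω - c n ω)
    (ha_sum : ∀ᵐ ω ∂P, Summable fun n => a n ω)
    (hb_sum : ∀ᵐ ω ∂P, Summable fun n => b n ω) :
    ∀ᵐ ω ∂P, (∃ l : ℝ, Tendsto (fun n => ν n ω) atTop (nhds l)) ∧
      Summable fun n => c n ω := by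
  classical
  set ℱ : Filtration ℕ mΩ := ⟨F, hF_mono, hF_le⟩ with hℱ
  -- measurability of the products
  have hπ_meas : ∀ n m : ℕ, m ≤ n + 1 → Measurable[F n] (RSpi a m) := by
    intro n m hm
    refine Finset.measurable_prod (Finset.range m) fun k hk => ?_
    have hk' : k ≤ n := by have := Finset.mem_range.mp hk; omega
    exact measurable_const.add ((ha_adapted k).mono (hF_mono hk') le_rfl)
  -- measurability of normalized processes
  have hν'_meas : ∀ n, Measurable[F n] (RSnorm a ν n) := fun n =>
    ((hπ_meas n n (by omega)).inv.mul (hν_adapted n))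
  have hb'_meas : ∀ n, Measurable[F n] (RSnorm' a b n) := fun n =>
    ((hπ_meas n (n + 1) le_rfl).inv.mul (hb_adapted n))
  have hc'_meas : ∀ n, Measurable[F n] (RSnorm' a c n) := fun n =>
    ((hπ_meas n (n + 1) le_rfl).inv.mul (hc_adapted n))
  -- partial sums measurability
  have hS_meas : ∀ n m : ℕ, m ≤ n + 1 →
      Measurable[F n] (fun ω => ∑ k ∈ Finset.range m, (RSnorm' a b k ω - RSnorm' a c k ω)) := by
    intro n m hm
    refine Finset.measurable_sum (Finset.range m) fun k hk => ?_
    have hk' : k ≤ n := by have := Finset.mem_range.mp hk; omega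
    exact ((hb'_meas k).mono (hF_mono hk') le_rfl).sub ((hc'_meas k).mono (hF_mono hk') le_rfl)
  have hY_meas : ∀ n, Measurable[F n] (RSY a b c ν n) := fun n =>
    (hS_meas n n (by omega)).sub (hν'_meas n)
  -- integrability
  have hν'_int : ∀ n, Integrable (RSnorm a ν n) P := by
    intro n
    refine (hν_int n).mono' (((hν'_meas n).mono (hF_le n) le_rfl).aestronglyMeasurable)
      (Filter.Eventually.of_forall fun ω => ?_)
    rw [Real.norm_eq_abs, abs_of_nonneg (RSnorm_nonneg ha_nonneg hν_nonneg n ω)]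
    exact RSnorm_le ha_nonneg hν_nonneg n ω
  have hb'_int : ∀ n, Integrable (RSnorm' a b n) P := by
    intro n
    refine (hb_int n).mono' (((hb'_meas n).mono (hF_le n) le_rfl).aestronglyMeasurable)
      (Filter.Eventually.of_forall fun ω => ?_)
    rw [Real.norm_eq_abs, abs_of_nonneg (RSnorm'_nonneg ha_nonneg hb_nonneg n ω)]
    exact RSnorm'_le ha_nonneg hb_nonneg n ω
  have hc'_int : ∀ n, Integrable (RSnorm' a c n) P := by
    intro n
    refine (hc_int n).mono' (((hc'_meas n).mono (hF_le n) le_rfl).aestronglyMeasurable)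
      (Filter.Eventually.of_forall fun ω => ?_)
    rw [Real.norm_eq_abs, abs_of_nonneg (RSnorm'_nonneg ha_nonneg hc_nonneg n ω)]
    exact RSnorm'_le ha_nonneg hc_nonneg n ω
  have hS_int : ∀ m, Integrable
      (fun ω => ∑ k ∈ Finset.range m, (RSnorm' a b k ω - RSnorm' a c k ω)) P := by
    intro m
    exact integrable_finset_sum _ fun k _ => (hb'_int k).sub (hc'_int k)
  have hY_int : ∀ n, Integrable (RSY a b c ν n) P := fun n => (hS_int n).sub (hν'_int n)
  -- key submartingale step for Y
  have hstep : ∀ n, RSY a b c ν n ≤ᵐ[P] P[RSY a b c ν (n + 1)|F n] := by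
    intro n
    have hπ1_meas : Measurable[F n] fun ω => (RSpi a (n + 1) ω)⁻¹ :=
      (hπ_meas n (n + 1) le_rfl).inv
    have key : P[RSnorm a ν (n + 1)|F n]
        =ᵐ[P] fun ω => (RSpi a (n + 1) ω)⁻¹ * (P[ν (n + 1)|F n]) ω := by
      have h := condExp_mul_of_stronglyMeasurable_left (μ := P) (m := F n)
        hπ1_meas.stronglyMeasurable
        (g := ν (n + 1)) (hν'_int (n + 1)) (hν_int (n + 1))
      exact h
    have hScond : P[(fun ω => ∑ k ∈ Finset.range (n + 1),
        (RSnorm' a b k ω - RSnorm' a c k ω))|F n]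
        = fun ω => ∑ k ∈ Finset.range (n + 1), (RSnorm' a b k ω - RSnorm' a c k ω) :=
      condExp_of_stronglyMeasurable (hF_le n) (hS_meas n (n + 1) le_rfl).stronglyMeasurable
        (hS_int (n + 1))
    have hsub : P[RSY a b c ν (n + 1)|F n] =ᵐ[P]
        (fun ω => ∑ k ∈ Finset.range (n + 1), (RSnorm' a b k ω - RSnorm' a c k ω))
          - P[RSnorm a ν (n + 1)|F n] := by
      have h := condExp_sub (μ := P) (m := F n) (hS_int (n + 1)) (hν'_int (n + 1))
      rw [hScond] at h
      exact h
    filter_upwards [hsub, key, hineq n] with ω h1 h2 h3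
    have hπpos := RSpi_pos ha_nonneg n ω
    have hπ1pos := RSpi_pos ha_nonneg (n + 1) ω
    have hinv_nonneg : (0:ℝ) ≤ (RSpi a (n + 1) ω)⁻¹ := inv_nonneg.2 hπ1pos.le
    have hmul := mul_le_mul_of_nonneg_left h3 hinv_nonneg
    have e1 : (RSpi a (n + 1) ω)⁻¹ * (ν n ω * (1 + a n ω) + b n ω - c n ω)
        = RSnorm a ν n ω + RSnorm' a b n ω - RSnorm' a c n ω := by
      have hsucc : RSpi a (n + 1) ω = RSpi a n ω * (1 + a n ω) := RSpi_succ n ω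
      have hane : (0:ℝ) < 1 + a n ω := by linarith [ha_nonneg n ω]
      unfold RSnorm RSnorm'
      rw [hsucc]
      field_simp
    rw [e1] at hmul
    have h1' : (P[RSY a b c ν (n + 1)|F n]) ω
        = (∑ k ∈ Finset.range (n + 1), (RSnorm' a b k ω - RSnorm' a c k ω))
          - (P[RSnorm a ν (n + 1)|F n]) ω := h1
    have hYn : RSY a b c ν n ω
        = (∑ k ∈ Finset.range n, (RSnorm' a b k ω - RSnorm' a c k ω)) - RSnorm a ν n ω := rfl
    have hsum : ∑ k ∈ Finset.range (n + 1), (RSnorm' a b k ω - RSnorm' a c k ω)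
        = (∑ k ∈ Finset.range n, (RSnorm' a b k ω - RSnorm' a c k ω))
          + (RSnorm' a b n ω - RSnorm' a c n ω) := Finset.sum_range_succ _ _
    rw [hYn, h1', h2, hsum]
    linarith
  -- the stopped process Z^M is a submartingale
  have hI_meas : ∀ M n, Measurable[F n] (RSI a b M n) := by
    intro M n
    unfold RSI
    refine Measurable.ite ?_ measurable_const measurable_const
    have hg : Measurable[F n] fun ω => ∑ j ∈ Finset.range (n + 1), RSnorm' a b j ω := by
      refine Finset.measurable_sum (Finset.range (n + 1)) fun k hk => ?_
      have hk' : k ≤ n := by have := Finset.mem_range.mp hk; omega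
      exact (hb'_meas k).mono (hF_mono hk') le_rfl
    exact measurableSet_le hg measurable_const
  have hI_bd : ∀ M n (ω : Ω), ‖RSI a b M n ω‖ ≤ 1 := by
    intro M n ω
    unfold RSI
    split <;> simp
  have hI_nonneg : ∀ M n (ω : Ω), 0 ≤ RSI a b M n ω := by
    intro M n ω
    unfold RSI
    split <;> simp
  have hZ_adapted : ∀ M, StronglyAdapted ℱ (RSZ a b c ν M) := by
    intro M n
    refine Measurable.stronglyMeasurable ?_
    unfold RSZ
    refine Measurable.add ((hY_meas 0).mono (hF_mono (Nat.zero_le n)) le_rfl) ?_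
    refine Finset.measurable_sum (Finset.range n) fun k hk => ?_
    have hk' : k + 1 ≤ n := Finset.mem_range.mp hk
    have h1 : Measurable[F n] (RSI a b M k) :=
      (hI_meas M k).mono (hF_mono (by omega)) le_rfl
    have h2 : Measurable[F n] (RSY a b c ν (k + 1)) :=
      (hY_meas (k + 1)).mono (hF_mono hk') le_rfl
    have h3 : Measurable[F n] (RSY a b c ν k) :=
      (hY_meas k).mono (hF_mono (by omega)) le_rfl
    exact h1.mul (h2.sub h3)
  have hprod_int : ∀ M k, Integrable
      (fun ω => RSI a b M k ω * (RSY a b c ν (k + 1) ω - RSY a b c ν k ω)) P := by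
    intro M k
    refine Integrable.bdd_mul (c := 1) ((hY_int (k + 1)).sub (hY_int k))
      (((hI_meas M k).mono (hF_le k) le_rfl).aestronglyMeasurable)
      (Filter.Eventually.of_forall fun ω => hI_bd M k ω)
  have hZ_int : ∀ M n, Integrable (RSZ a b c ν M n) P := by
    intro M n
    have : RSZ a b c ν M n = fun ω => RSY a b c ν 0 ω +
        ∑ k ∈ Finset.range n, RSI a b M k ω * (RSY a b c ν (k + 1) ω - RSY a b c ν k ω) := rfl
    rw [this]
    exact (hY_int 0).add (integrable_finset_sum _ fun k _ => hprod_int M k)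
  have hZ_submart : ∀ M, Submartingale (RSZ a b c ν M) ℱ P := by
    intro M
    refine submartingale_nat (hZ_adapted M) (hZ_int M) fun n => ?_
    have hZeq : RSZ a b c ν M (n + 1) = RSZ a b c ν M n
        + fun ω => RSI a b M n ω * (RSY a b c ν (n + 1) ω - RSY a b c ν n ω) :=
      funext fun ω => RSZ_succ M n ω
    have hcadd : P[RSZ a b c ν M (n + 1)|F n] =ᵐ[P]
        P[RSZ a b c ν M n|F n]
          + P[(fun ω => RSI a b M n ω * (RSY a b c ν (n + 1) ω - RSY a b c ν n ω))|F n] := by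
      rw [hZeq]
      exact condExp_add (hZ_int M n) (hprod_int M n) (F n)
    have hcZ : P[RSZ a b c ν M n|F n] = RSZ a b c ν M n :=
      condExp_of_stronglyMeasurable (hF_le n) (hZ_adapted M n) (hZ_int M n)
    have hcmul : P[(fun ω => RSI a b M n ω * (RSY a b c ν (n + 1) ω - RSY a b c ν n ω))|F n]
        =ᵐ[P] fun ω => RSI a b M n ω * (P[RSY a b c ν (n + 1) - RSY a b c ν n|F n]) ω := by
      have h := condExp_mul_of_stronglyMeasurable_left (μ := P) (m := F n)
        (hI_meas M n).stronglyMeasurable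
        (g := RSY a b c ν (n + 1) - RSY a b c ν n) (hprod_int M n)
        ((hY_int (n + 1)).sub (hY_int n))
      exact h
    have hcsub : P[RSY a b c ν (n + 1) - RSY a b c ν n|F n]
        =ᵐ[P] P[RSY a b c ν (n + 1)|F n] - RSY a b c ν n := by
      have h := condExp_sub (μ := P) (m := F n) (hY_int (n + 1)) (hY_int n)
      rw [condExp_of_stronglyMeasurable (hF_le n) ((hY_meas n).stronglyMeasurable)
        (hY_int n)] at h
      exact h
    filter_upwards [hcadd, hcmul, hcsub.mono (fun ω h => h), hstep n] with ω h1 h2 h3 h4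
    have h2' : (P[(fun ω => RSI a b M n ω
        * (RSY a b c ν (n + 1) ω - RSY a b c ν n ω))|F n]) ω
        = RSI a b M n ω * (P[RSY a b c ν (n + 1) - RSY a b c ν n|F n]) ω := h2
    have h5 : (P[RSZ a b c ν M (n + 1)|F n]) ω
        = RSZ a b c ν M n ω
          + RSI a b M n ω * ((P[RSY a b c ν (n + 1)|F n]) ω - RSY a b c ν n ω) := by
      have := h1
      rw [Pi.add_apply, hcZ, h2', h3] at this
      simpa using this
    rw [h5]
    have : 0 ≤ RSI a b M n ω * ((P[RSY a b c ν (n + 1)|F n]) ω - RSY a b c ν n ω) :=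
      mul_nonneg (hI_nonneg M n ω) (by linarith)
    linarith
  -- L¹ bound for Z^M
  set K : ℝ := ∫ ω, ν 0 ω ∂P with hK
  have hK_nonneg : 0 ≤ K := integral_nonneg fun ω => hν_nonneg 0 ω
  have hZ_mean : ∀ M n, -K ≤ ∫ ω, RSZ a b c ν M n ω ∂P := by
    intro M n
    have h01 := (hZ_submart M).2.1 0 n (Nat.zero_le n)
    have hint : ∫ ω, RSZ a b c ν M 0 ω ∂P ≤ ∫ ω, RSZ a b c ν M n ω ∂P := by
      calc ∫ ω, RSZ a b c ν M 0 ω ∂P ≤ ∫ ω, (P[RSZ a b c ν M n|F 0]) ω ∂P :=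
            integral_mono_ae (hZ_int M 0) integrable_condExp h01
        _ = ∫ ω, RSZ a b c ν M n ω ∂P := integral_condExp (hF_le 0)
    have hZ0 : ∀ ω, RSZ a b c ν M 0 ω = -(RSnorm a ν 0 ω) := by
      intro ω
      simp [RSZ, RSY]
    have h0int : ∫ ω, RSZ a b c ν M 0 ω ∂P = -∫ ω, RSnorm a ν 0 ω ∂P := by
      simp only [hZ0]
      exact integral_neg _
    have hle : ∫ ω, RSnorm a ν 0 ω ∂P ≤ K :=
      integral_mono (hν'_int 0) (hν_int 0) fun ω => RSnorm_le ha_nonneg hν_nonneg 0 ω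
    linarith
  have hZ_L1 : ∀ M n, eLpNorm (RSZ a b c ν M n) 1 P ≤ ENNReal.ofReal (2 * M + K) := by
    intro M n
    have habs : ∀ ω, ‖RSZ a b c ν M n ω‖ ≤ 2 * M - RSZ a b c ν M n ω := by
      intro ω
      have hle := RSZ_le ha_nonneg hb_nonneg hν_nonneg hc_nonneg M n ω
      have hM0 : (0:ℝ) ≤ M := Nat.cast_nonneg M
      rw [Real.norm_eq_abs]
      rcases abs_cases (RSZ a b c ν M n ω) with ⟨h, _⟩ | ⟨h, _⟩ <;> rw [h] <;> linarith
    have hint : ∫ ω, ‖RSZ a b c ν M n ω‖ ∂P ≤ 2 * M + K := by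
      calc ∫ ω, ‖RSZ a b c ν M n ω‖ ∂P
          ≤ ∫ ω, (2 * M - RSZ a b c ν M n ω) ∂P :=
            integral_mono (hZ_int M n).norm ((integrable_const _).sub (hZ_int M n))
              habs
        _ = 2 * M - ∫ ω, RSZ a b c ν M n ω ∂P := by
            rw [integral_sub (integrable_const _) (hZ_int M n), integral_const]
            simp
        _ ≤ 2 * M + K := by linarith [hZ_mean M n]
    calc eLpNorm (RSZ a b c ν M n) 1 P = ENNReal.ofReal (∫ ω, ‖RSZ a b c ν M n ω‖ ∂P) := by
          rw [eLpNorm_one_eq_lintegral_enorm,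
            ← ofReal_integral_norm_eq_lintegral_enorm (hZ_int M n)]
      _ ≤ ENNReal.ofReal (2 * M + K) := ENNReal.ofReal_le_ofReal hint
  have hZconv : ∀ᵐ ω ∂P, ∀ M : ℕ,
      ∃ L, Tendsto (fun n => RSZ a b c ν M n ω) atTop (𝓝 L) := by
    rw [ae_all_iff]
    intro M
    exact (hZ_submart M).exists_ae_tendsto_of_bdd (R := (2 * M + K).toNNReal)
      fun n => by simpa [ENNReal.ofReal] using hZ_L1 M n
  -- conclusion, pointwise
  filter_upwards [ha_sum, hb_sum, hZconv] with ω hsa hsb hZc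
  have hb'_sum : Summable fun n => RSnorm' a b n ω :=
    Summable.of_nonneg_of_le (fun n => RSnorm'_nonneg ha_nonneg hb_nonneg n ω)
      (fun n => RSnorm'_le ha_nonneg hb_nonneg n ω) hsb
  set B : ℝ := ∑' n, RSnorm' a b n ω with hB
  set M : ℕ := ⌈B⌉₊ with hMdef
  have hM : ∀ n, ∑ j ∈ Finset.range n, RSnorm' a b j ω ≤ (M:ℝ) := by
    intro n
    refine (Summable.sum_le_tsum (Finset.range n)
      (fun k _ => RSnorm'_nonneg ha_nonneg hb_nonneg k ω) hb'_sum).trans ?_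
    exact (Nat.le_ceil B)
  have hYZ : ∀ n, RSZ a b c ν M n ω = RSY a b c ν n ω := fun n =>
    RSZ_eq_RSY ha_nonneg hb_nonneg (hM n)
  obtain ⟨L, hL⟩ := hZc M
  have hL' : Tendsto (fun n => RSY a b c ν n ω) atTop (𝓝 L) := by
    simpa only [hYZ] using hL
  have hbtend : Tendsto (fun n => ∑ k ∈ Finset.range n, RSnorm' a b k ω) atTop (𝓝 B) :=
    hb'_sum.hasSum.tendsto_sum_nat
  have hW_eq : ∀ n, (∑ k ∈ Finset.range n, RSnorm' a b k ω) - RSY a b c ν n ω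
      = RSnorm a ν n ω + ∑ k ∈ Finset.range n, RSnorm' a c k ω := by
    intro n
    unfold RSY
    rw [Finset.sum_sub_distrib]
    ring
  have hWt : Tendsto (fun n => (∑ k ∈ Finset.range n, RSnorm' a b k ω) - RSY a b c ν n ω)
      atTop (𝓝 (B - L)) := hbtend.sub hL'
  have hc'_sum : Summable fun n => RSnorm' a c n ω := by
    refine summable_of_sum_range_le (c := B - L)
      (fun n => RSnorm'_nonneg ha_nonneg hc_nonneg n ω) fun n => ?_
    refine ge_of_tendsto hWt (Filter.eventually_atTop.2 ⟨n, fun m hm => ?_⟩)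
    rw [hW_eq m]
    have h1 : ∑ k ∈ Finset.range n, RSnorm' a c k ω
        ≤ ∑ k ∈ Finset.range m, RSnorm' a c k ω :=
      Finset.sum_le_sum_of_subset_of_nonneg (Finset.range_subset_range.2 hm)
        fun k _ _ => RSnorm'_nonneg ha_nonneg hc_nonneg k ω
    linarith [RSnorm_nonneg ha_nonneg hν_nonneg m ω]
  have hctend : Tendsto (fun n => ∑ k ∈ Finset.range n, RSnorm' a c k ω) atTop
      (𝓝 (∑' n, RSnorm' a c n ω)) := hc'_sum.hasSum.tendsto_sum_nat
  have hν't : Tendsto (fun n => RSnorm a ν n ω) atTop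
      (𝓝 (B - L - ∑' n, RSnorm' a c n ω)) := by
    have h := hWt.sub hctend
    refine h.congr fun n => ?_
    have := hW_eq n
    linarith
  have hπ_bdd : BddAbove (Set.range fun n => RSpi a n ω) := by
    refine ⟨Real.exp (∑' k, a k ω), ?_⟩
    rintro x ⟨n, rfl⟩
    exact RSpi_le_exp ha_nonneg ω hsa n
  have hπt : Tendsto (fun n => RSpi a n ω) atTop (𝓝 (⨆ n, RSpi a n ω)) :=
    tendsto_atTop_ciSup (RSpi_mono ha_nonneg ω) hπ_bdd
  constructor
  · refine ⟨(B - L - ∑' n, RSnorm' a c n ω) * ⨆ n, RSpi a n ω, ?_⟩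
    have h := hν't.mul hπt
    refine h.congr fun n => ?_
    have hπne : RSpi a n ω ≠ 0 := (RSpi_pos ha_nonneg n ω).ne'
    unfold RSnorm
    field_simp
  · refine Summable.of_nonneg_of_le (fun n => hc_nonneg n ω) (fun n => ?_)
      (hc'_sum.mul_left (Real.exp (∑' k, a k ω)))
    have hπne : RSpi a (n + 1) ω ≠ 0 := (RSpi_pos ha_nonneg (n + 1) ω).ne'
    have h1 : c n ω = RSpi a (n + 1) ω * RSnorm' a c n ω := by
      unfold RSnorm'
      field_simp
    rw [h1]
    exact mul_le_mul_of_nonneg_right (RSpi_le_exp ha_nonneg ω hsa (n + 1))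
      (RSnorm'_nonneg ha_nonneg hc_nonneg n ω)
end

section
/- Let $\{t_n\}$ be a positive sequence with $\sum_{j=1}^\infty \frac{t_j}{\sum_{n=1}^j t_n} = \infty$, and let $\{T_n\}$ be a non-negative sequence such that $\{(\sum_{j=1}^{n-1} t_j) T_n\}$ converges and $\sum_{n=1}^\infty t_n T_n < \infty$. Then $\lim_{n \to \infty} (\sum_{j=1}^{n-1} t_j) T_n = 0$; in particular $T_n = \mathcal{O}\big((\sum_{j=1}^{n-1} t_j)^{-1}\big)$. -/
open Filter

/-- Deterministic core of the rate: if `t` is positive with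
`∑_j t_j / (∑_{n=1}^j t_n) = ∞`, `T` is non-negative, `(∑_{j=1}^{n-1} t_j) T_n`
converges and `∑ t_n T_n < ∞`, then `(∑_{j=1}^{n-1} t_j) T_n → 0`; in particular
`T_n = O((∑_{j=1}^{n-1} t_j)⁻¹)`. -/
theorem stmt_7 (t T : ℕ → ℝ)
    (ht : ∀ n, 1 ≤ n → 0 < t n)
    (hdiv : Tendsto
      (fun J => ∑ j ∈ Finset.Icc 1 J, t j / ∑ n ∈ Finset.Icc 1 j, t n) atTop atTop)
    (hT : ∀ n, 1 ≤ n → 0 ≤ T n)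
    (hconv : ∃ l : ℝ, Tendsto (fun n => (∑ j ∈ Finset.Icc 1 (n - 1), t j) * T n)
      atTop (nhds l))
    (hsum : ∃ M : ℝ, ∀ J, ∑ n ∈ Finset.Icc 1 J, t n * T n ≤ M) :
    Tendsto (fun n => (∑ j ∈ Finset.Icc 1 (n - 1), t j) * T n) atTop (nhds 0) ∧
      ∃ C : ℝ, 0 < C ∧ ∀ n, 2 ≤ n → T n ≤ C / ∑ j ∈ Finset.Icc 1 (n - 1), t j := by
  obtain ⟨l, hl⟩ := hconv
  obtain ⟨M, hM⟩ := hsum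
  set S : ℕ → ℝ := fun j => ∑ n ∈ Finset.Icc 1 j, t n with hS
  have hSpos : ∀ j, 1 ≤ j → 0 < S j := by
    intro j hj
    apply Finset.sum_pos
    · intro i hi
      exact ht i (Finset.mem_Icc.mp hi).1
    · exact ⟨1, Finset.mem_Icc.mpr ⟨le_refl 1, hj⟩⟩
  have hSnonneg : ∀ j, 0 ≤ S j := by
    intro j
    apply Finset.sum_nonneg
    intro i hi
    exact (ht i (Finset.mem_Icc.mp hi).1).le
  have hSmono : ∀ n, 1 ≤ n → S (n - 1) ≤ S n := by
    intro n hn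
    apply Finset.sum_le_sum_of_subset_of_nonneg
    · apply Finset.Icc_subset_Icc_right; omega
    · intro i hi _; exact (ht i (Finset.mem_Icc.mp hi).1).le
  have hfnonneg : ∀ n, 1 ≤ n → 0 ≤ S (n - 1) * T n := fun n hn =>
    mul_nonneg (hSnonneg _) (hT n hn)
  -- l ≥ 0
  have hl0 : 0 ≤ l := by
    apply ge_of_tendsto hl
    filter_upwards [eventually_ge_atTop 1] with n hn using hfnonneg n hn
  -- l = 0
  have hlz : l = 0 := by
    by_contra hne
    have hlpos : 0 < l := lt_of_le_of_ne hl0 (Ne.symm hne)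
    have hev : ∀ᶠ n in atTop, l / 2 < S (n - 1) * T n :=
      hl.eventually (eventually_gt_nhds (half_lt_self hlpos))
    obtain ⟨N, hN⟩ := (hev.and (eventually_ge_atTop 2)).exists_forall_of_atTop
    set N' := max N 2 with hN'
    -- key pointwise bound
    have key : ∀ n, N' ≤ n → (l / 2) * (t n / S n) ≤ t n * T n := by
      intro n hn
      have hn2 : 2 ≤ n := le_trans (le_max_right _ _) hn
      have hfn : l / 2 < S (n - 1) * T n := (hN n (le_trans (le_max_left _ _) hn)).1
      have hSn1 : 0 < S (n - 1) := hSpos _ (by omega)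
      have hSn : 0 < S n := hSpos _ (by omega)
      have hTn : l / 2 / S (n - 1) ≤ T n := by
        rw [div_le_iff₀ hSn1]; linarith [hfn]
      calc (l / 2) * (t n / S n) ≤ (l / 2) * (t n / S (n - 1)) := by
            apply mul_le_mul_of_nonneg_left _ (by positivity)
            exact div_le_div_of_nonneg_left (ht n (by omega)).le hSn1 (hSmono n (by omega))
        _ = t n * (l / 2 / S (n - 1)) := by ring
        _ ≤ t n * T n := mul_le_mul_of_nonneg_left hTn (ht n (by omega)).le
    set A : ℕ → ℝ := fun J => ∑ j ∈ Finset.Icc 1 J, t j / S j with hA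
    -- bound on A J for J ≥ N'
    have hbound : ∀ J, N' ≤ J → A J ≤ A (N' - 1) + 2 * M / l := by
      intro J hJ
      have hsplit : A J = A (N' - 1) + ∑ j ∈ Finset.Icc N' J, t j / S j := by
        have h1 : Finset.Icc 1 J = Finset.Ioc 0 J := by
          rw [← Finset.Icc_add_one_left_eq_Ioc 0]; rfl
        have h2 : Finset.Icc 1 (N' - 1) = Finset.Ioc 0 (N' - 1) := by
          rw [← Finset.Icc_add_one_left_eq_Ioc 0]; rfl
        have h3 : Finset.Icc N' J = Finset.Ioc (N' - 1) J := by
          rw [← Finset.Icc_add_one_left_eq_Ioc]; congr 1; omega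
        rw [hA]
        simp only [h1, h2, h3]
        rw [← Finset.sum_Ioc_consecutive _ (by omega : (0:ℕ) ≤ N' - 1) (by omega : N' - 1 ≤ J)]
      have hle : ∑ j ∈ Finset.Icc N' J, t j / S j ≤ 2 * M / l := by
        have h1 : (l / 2) * ∑ j ∈ Finset.Icc N' J, t j / S j
            ≤ ∑ j ∈ Finset.Icc N' J, t j * T j := by
          rw [Finset.mul_sum]
          apply Finset.sum_le_sum
          intro i hi
          exact key i (Finset.mem_Icc.mp hi).1
        have h2 : ∑ j ∈ Finset.Icc N' J, t j * T j ≤ ∑ j ∈ Finset.Icc 1 J, t j * T j := by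
          apply Finset.sum_le_sum_of_subset_of_nonneg
          · apply Finset.Icc_subset_Icc_left; omega
          · intro i hi _
            exact mul_nonneg (ht i (Finset.mem_Icc.mp hi).1).le (hT i (Finset.mem_Icc.mp hi).1)
        have h3 := hM J
        rw [le_div_iff₀ hlpos]
        nlinarith
      linarith [hsplit, hle]
    -- contradiction with divergence
    have := (hdiv.eventually (eventually_ge_atTop (A (N' - 1) + 2 * M / l + 1))).and
      (eventually_ge_atTop N')
    obtain ⟨J, hJ1, hJ2⟩ := this.exists
    have := hbound J hJ2
    simp only [hA] at this hJ1
    linarith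
  rw [hlz] at hl
  refine ⟨hl, ?_⟩
  obtain ⟨C, hC⟩ := hl.bddAbove_range
  refine ⟨max C 1, lt_of_lt_of_le one_pos (le_max_right _ _), ?_⟩
  intro n hn
  have hSn1 : 0 < S (n - 1) := hSpos _ (by omega)
  rw [le_div_iff₀ hSn1]
  have : S (n - 1) * T n ≤ C := hC ⟨n, rfl⟩
  calc T n * S (n - 1) = S (n - 1) * T n := by ring
    _ ≤ C := this
    _ ≤ max C 1 := le_max_left _ _
end
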